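/- arXiv:1702.08119 — 2 statements merged into one kernel-verified Lean document; each statement's English description precedes it below -/
import Mathlib

section
/- Let T be a tree (dendroidally ordered set). For every edge e ∈ T there exists a minimum tuple e^λ ∈ T⁺ with e^λ ≤ e, and e^λ = l_1⋯l_k consists exactly of those leaves l_i of T with l_i ≤_d e. Moreover, a broad relation f_1⋯f_n ≤ e holds in T if and only if: each f_i ≤_d e, the f_i are pairwise ≤_d-incomparable, and f_1^λ ⋯ f_n^λ = e^λ. -/
universe u

namespace BroadPaper

/-- A broad relation on `X`: a relation between finite unordered tuples
(multisets) over `X` and elements of `X`. -/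
abbrev Rel (X : Type u) : Type u := Multiset X → X → Prop

variable {X : Type u} {Y : Type u} {A : Type u} {B : Type u} {Z : Type u}

/-- Broad transitivity: if `f₁ ⋯ fₙ ≤ e` and `g̲ᵢ ≤ fᵢ` then `g̲₁ ⋯ g̲ₙ ≤ e`,
encoded via a multiset of pairs `(g̲ᵢ, fᵢ)`. -/
def BTrans (r : Rel X) : Prop :=
  ∀ (p : Multiset (Multiset X × X)) (e : X),
    r (p.map Prod.snd) e → (∀ q ∈ p, r q.1 q.2) → r ((p.map Prod.fst).sum) e

/-- A pre-broad poset: reflexivity plus broad transitivity. -/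
def IsPreBroad (r : Rel X) : Prop := (∀ e : X, r {e} e) ∧ BTrans r

/-- A (commutative) broad poset: a pre-broad poset satisfying antisymmetry. -/
def IsBroad (r : Rel X) : Prop :=
  IsPreBroad r ∧ ∀ e f : X, r {e} f → r {f} e → e = f

/-- Simplicity: letters in any broad relation are pairwise distinct. -/
def Simple (r : Rel X) : Prop := ∀ fs e, r fs e → fs.Nodup

/-- The descendant relation `f ≤_d e`. -/
def descends (r : Rel X) (f e : X) : Prop := ∃ fs, r fs e ∧ f ∈ fs

def Comparable (r : Rel X) (f g : X) : Prop := descends r f g ∨ descends r g f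

def Incomp (r : Rel X) (f g : X) : Prop := ¬ descends r f g ∧ ¬ descends r g f

/-- Blockwise extension of a broad relation to a relation between tuples:
`fs ≤ es` iff `fs = f̲₁ ⋯ f̲ₖ`, `es = e₁ ⋯ eₖ` with `f̲ᵢ ≤ eᵢ`. -/
def tupleLE (r : Rel X) (fs es : Multiset X) : Prop :=
  ∃ p : Multiset (Multiset X × X),
    p.map Prod.snd = es ∧ (p.map Prod.fst).sum = fs ∧ ∀ q ∈ p, r q.1 q.2

/-- A leaf: no tuple strictly below `e`. -/
def IsLeaf (r : Rel X) (e : X) : Prop := ¬ ∃ fs, r fs e ∧ fs ≠ ({e} : Multiset X)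

/-- `fs` is the maximum tuple strictly below `e` (written `e^↑`).
If `fs ≠ 0`, `e` is a node; if `fs = 0`, `e` is a stump. -/
def upTuple (r : Rel X) (e : X) (fs : Multiset X) : Prop :=
  (r fs e ∧ fs ≠ ({e} : Multiset X)) ∧
    ∀ gs, r gs e → gs ≠ ({e} : Multiset X) → tupleLE r gs fs

def IsStump (r : Rel X) (e : X) : Prop := upTuple r e 0

/-- A dendroidally ordered set (tree): a finite simple broad poset in which
every element is a leaf, node or stump, with a `≤_d`-maximum (root). -/
def IsTree (r : Rel X) : Prop :=
  IsBroad r ∧ Finite X ∧ Simple r ∧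
    (∀ e : X, IsLeaf r e ∨ ∃ fs, upTuple r e fs) ∧
    ∃ rt : X, ∀ e, descends r e rt

def IsMaxEl (r : Rel X) (e : X) : Prop := ∀ s, descends r e s → s = e

/-- A forestially ordered set (forest): each element has a unique
`≤_d`-maximal element above it. -/
def IsForest (r : Rel X) : Prop :=
  IsBroad r ∧ Finite X ∧ Simple r ∧
    (∀ e : X, IsLeaf r e ∨ ∃ fs, upTuple r e fs) ∧
    ∀ e : X, ∃! rt : X, IsMaxEl r rt ∧ descends r e rt

/-- A map of broad posets: preserves broad relations (letterwise on tuples). -/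
def BroadHom (r : Rel X) (r' : Rel Y) (φ : X → Y) : Prop :=
  ∀ fs e, r fs e → r' (fs.map φ) (φ e)

/-- `rs` is the root tuple: the tuple of `≤_d`-maximal elements (no repeats). -/
def IsRootTuple (r : Rel X) (rs : Multiset X) : Prop :=
  rs.Nodup ∧ ∀ x, x ∈ rs ↔ IsMaxEl r x

/-- Independent map of forests: `φ(r̲_F)·e̲ ≤ r̲_{F'}` for some tuple `e̲`. -/
def Independent (r : Rel X) (r' : Rel Y) (φ : X → Y) : Prop :=
  ∃ (rs : Multiset X) (rs' : Multiset Y) (es : Multiset Y),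
    IsRootTuple r rs ∧ IsRootTuple r' rs' ∧ tupleLE r' (rs.map φ + es) rs'

/-- The (pre-)broad relation generated by a set of generating relations:
closure under reflexivity and broad transitivity. -/
inductive GenRel (gen : Rel X) : Rel X
  | of : ∀ fs e, gen fs e → GenRel gen fs e
  | refl : ∀ e, GenRel gen {e} e
  | btrans : ∀ (p : Multiset (Multiset X × X)) (e : X),
      GenRel gen (p.map Prod.snd) e → (∀ q ∈ p, GenRel gen q.1 q.2) →
      GenRel gen ((p.map Prod.fst).sum) e

/-- Generators of the tensor product `S ⊗ T`: relations `s̲ × t ≤ (s,t)` and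
`s × t̲ ≤ (s,t)`. -/
def tensorGen (rS : Rel A) (rT : Rel B) : Rel (A × B) := fun xs x =>
  (∃ as, rS as x.1 ∧ xs = as.map fun a => (a, x.2)) ∨
  (∃ bs, rT bs x.2 ∧ xs = bs.map fun b => (x.1, b))

/-- The tensor product broad relation on `A × B`. -/
def tensorRel (rS : Rel A) (rT : Rel B) : Rel (A × B) := GenRel (tensorGen rS rT)

/-- Product of tuples: all pairs from `as` and `bs`. -/
def mprod (as : Multiset A) (bs : Multiset B) : Multiset (A × B) :=
  as.bind fun a => bs.map fun b => (a, b)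

end BroadPaper

namespace BroadPaper

variable {X : Type u}

private theorem mem_mem_not_nodup {a : X} {s t : Multiset X} (h1 : a ∈ s) (h2 : a ∈ t) :
    ¬ (s + t).Nodup := by
  classical
  intro hn
  have hc := Multiset.nodup_iff_count_le_one.1 hn a
  rw [Multiset.count_add] at hc
  have c1 : 1 ≤ Multiset.count a s := Multiset.one_le_count_iff_mem.2 h1
  have c2 : 1 ≤ Multiset.count a t := Multiset.one_le_count_iff_mem.2 h2
  omega

private theorem msum_mem {s : Multiset (Multiset X)} {a : X} :
    a ∈ s.sum ↔ ∃ m ∈ s, a ∈ m := by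
  induction s using Multiset.induction with
  | empty => simp
  | cons b t ih => simp [Multiset.sum_cons, ih]

private theorem msum_le {s t : Multiset (Multiset X)} (h : s ≤ t) : s.sum ≤ t.sum := by
  obtain ⟨u, rfl⟩ := Multiset.le_iff_exists_add.1 h
  rw [Multiset.sum_add]
  exact Multiset.le_add_right _ _

private theorem sum_ite_eq_count [DecidableEq X] (a : X) (s : Multiset X) :
    (s.map fun t => if t = a then (1 : ℕ) else 0).sum = s.count a := by
  induction s using Multiset.induction with
  | empty => simp
  | cons b t ih =>
    rw [Multiset.map_cons, Multiset.sum_cons, ih, Multiset.count_cons]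
    by_cases h : b = a
    · simp [h, add_comm]
    · rw [if_neg h, if_neg (fun hh => h hh.symm)]; omega

/-- Substitution of one letter. -/
private theorem subst_one [DecidableEq X] {r : Rel X} (hrefl : ∀ x : X, r {x} x) (hb : BTrans r)
    {fs gs : Multiset X} {e f : X}
    (h1 : r fs e) (hf : f ∈ fs) (h2 : r gs f) : r (gs + fs.erase f) e := by
  have key := hb ((gs, f) ::ₘ (fs.erase f).map (fun x => (({x} : Multiset X), x))) e
  have hsnd : (((gs, f) ::ₘ (fs.erase f).map (fun x => (({x} : Multiset X), x))).map Prod.snd)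
      = fs := by
    rw [Multiset.map_cons, Multiset.map_map]
    have : ((fs.erase f).map (Prod.snd ∘ fun x => (({x} : Multiset X), x))) = fs.erase f := by
      simp
    rw [this, Multiset.cons_erase hf]
  have hfst : ((((gs, f) ::ₘ (fs.erase f).map (fun x => (({x} : Multiset X), x))).map
      Prod.fst).sum) = gs + fs.erase f := by
    rw [Multiset.map_cons, Multiset.map_map, Multiset.sum_cons]
    congr 1
    have : ((fs.erase f).map (Prod.fst ∘ fun x => (({x} : Multiset X), x)))
        = (fs.erase f).map (fun x => ({x} : Multiset X)) := by simp [Function.comp]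
    rw [this, Multiset.sum_map_singleton]
  rw [hsnd, hfst] at key
  apply key h1
  intro q hq
  rcases Multiset.mem_cons.1 hq with h | h
  · rw [h]; exact h2
  · obtain ⟨x, _, rfl⟩ := Multiset.mem_map.1 h
    exact hrefl x

private theorem descends_refl {r : Rel X} (hrefl : ∀ x : X, r {x} x) (e : X) :
    descends r e e := ⟨{e}, hrefl e, Multiset.mem_singleton_self e⟩

private theorem descends_trans [DecidableEq X] {r : Rel X} (hrefl : ∀ x : X, r {x} x) (hb : BTrans r)
    {f g h : X} (h1 : descends r f g) (h2 : descends r g h) : descends r f h := by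
  obtain ⟨fs, hfs, hmf⟩ := h1
  obtain ⟨gs, hgs, hmg⟩ := h2
  exact ⟨fs + gs.erase g, subst_one hrefl hb hgs hmg hfs,
    Multiset.mem_add.2 (Or.inl hmf)⟩

/-- If `e` occurs in a tuple related to `e`, the tuple is `{e}`. -/
private theorem mem_self_eq_singleton [DecidableEq X] {r : Rel X} (ht : IsTree r) {fs : Multiset X} {e : X}
    (h : r fs e) (he : e ∈ fs) : fs = {e} := by
  obtain ⟨⟨⟨hrefl, hb⟩, _⟩, _, hsimple, _, _⟩ := id ht
  obtain ⟨s, rfl⟩ := Multiset.exists_cons_of_mem he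
  rcases s.empty_or_exists_mem with h0 | ⟨x, hx⟩
  · rw [h0]; rfl
  · exfalso
    have h2 : r ((e ::ₘ s) + ((e ::ₘ s).erase e)) e := subst_one hrefl hb h he h
    rw [Multiset.erase_cons_head] at h2
    exact mem_mem_not_nodup (Multiset.mem_cons_of_mem hx) hx (hsimple _ _ h2)

private theorem strict_of_ne [DecidableEq X] {r : Rel X} (ht : IsTree r) {fs : Multiset X} {e f : X}
    (h : r fs e) (hf : f ∈ fs) (hne : fs ≠ ({e} : Multiset X)) : f ≠ e := by
  rintro rfl
  exact hne (mem_self_eq_singleton ht h hf)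

private theorem descends_antisymm [DecidableEq X] {r : Rel X} (ht : IsTree r) {e f : X}
    (h1 : descends r f e) (h2 : descends r e f) : f = e := by
  obtain ⟨⟨⟨hrefl, hb⟩, hanti⟩, _, hsimple, _, _⟩ := id ht
  obtain ⟨fs, hfs, hmf⟩ := h1
  obtain ⟨es, hes, hme⟩ := h2
  have h3 : r (es + fs.erase f) e := subst_one hrefl hb hfs hmf hes
  have h4 := mem_self_eq_singleton ht h3 (Multiset.mem_add.2 (Or.inl hme))
  have hcard := congrArg Multiset.card h4
  rw [Multiset.card_add, Multiset.card_singleton] at hcard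
  have hes1 : 1 ≤ Multiset.card es := Multiset.card_pos_iff_exists_mem.2 ⟨e, hme⟩
  have herase : Multiset.card (fs.erase f) = 0 := by omega
  have hfs1 : fs = {f} := by
    have := Multiset.card_eq_zero.1 herase
    have hc := Multiset.cons_erase hmf
    rw [this] at hc
    exact hc.symm
  have hes2 : es = {e} := by
    have : Multiset.card es = 1 := by omega
    obtain ⟨x, hx⟩ := Multiset.card_eq_one.1 this
    rw [hx] at hme; rw [hx, Multiset.mem_singleton.1 hme]
  rw [hfs1] at hfs; rw [hes2] at hes
  exact hanti f e hfs hes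

private theorem sdes_wf [DecidableEq X] {r : Rel X} (ht : IsTree r) :
    WellFounded (fun f e : X => descends r f e ∧ f ≠ e) := by
  obtain ⟨⟨⟨hrefl, hb⟩, _⟩, hfin, _, _, _⟩ := id ht
  have : IsTrans X (fun f e : X => descends r f e ∧ f ≠ e) := by
    constructor
    rintro a b c ⟨h1, hn1⟩ ⟨h2, hn2⟩
    refine ⟨descends_trans hrefl hb h1 h2, ?_⟩
    rintro rfl
    exact hn1 (descends_antisymm ht h1 h2)
  have : IsIrrefl X (fun f e : X => descends r f e ∧ f ≠ e) := by
    constructor; rintro a ⟨_, hn⟩; exact hn rfl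
  exact Finite.wellFounded_of_trans_of_irrefl _

private theorem tupleLE_singleton {r : Rel X} {ls : Multiset X} {e : X} (h : r ls e) :
    tupleLE r ls {e} := by
  refine ⟨{(ls, e)}, ?_, ?_, ?_⟩ <;> simp [h]

private theorem tupleLE_add {r : Rel X} {a b c d : Multiset X}
    (h1 : tupleLE r a b) (h2 : tupleLE r c d) : tupleLE r (a + c) (b + d) := by
  obtain ⟨p, hp1, hp2, hp3⟩ := h1
  obtain ⟨q, hq1, hq2, hq3⟩ := h2
  refine ⟨p + q, ?_, ?_, ?_⟩
  · rw [Multiset.map_add, hp1, hq1]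
  · rw [Multiset.map_add, Multiset.sum_add, hp2, hq2]
  · intro x hx; rcases Multiset.mem_add.1 hx with h | h
    exacts [hp3 x h, hq3 x h]

private theorem tupleLE_join {r : Rel X} (q : Multiset (Multiset X × Multiset X))
    (h : ∀ pr ∈ q, tupleLE r pr.1 pr.2) :
    tupleLE r (q.map Prod.fst).sum (q.map Prod.snd).sum := by
  induction q using Multiset.induction with
  | empty => exact ⟨0, by simp, by simp, by simp⟩
  | cons a s ih =>
    simp only [Multiset.map_cons, Multiset.sum_cons]
    exact tupleLE_add (h a (Multiset.mem_cons_self a s))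
      (ih fun pr hpr => h pr (Multiset.mem_cons_of_mem hpr))

/-- A tuple below a tuple of leaves equals it. -/
private theorem tupleLE_leaves {r : Rel X} {ls a : Multiset X}
    (hleaf : ∀ l ∈ ls, IsLeaf r l) (h : tupleLE r a ls) : a = ls := by
  obtain ⟨p, hsnd, hfst, hrel⟩ := h
  have hblocks : ∀ pr ∈ p, pr.1 = ({pr.2} : Multiset X) := by
    intro pr hpr
    have hl : pr.2 ∈ ls := hsnd ▸ Multiset.mem_map_of_mem Prod.snd hpr
    by_contra hne
    exact hleaf pr.2 hl ⟨pr.1, hrel pr hpr, hne⟩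
  rw [← hfst, ← hsnd]
  have : p.map Prod.fst = p.map (fun pr => ({pr.2} : Multiset X)) :=
    Multiset.map_congr rfl hblocks
  rw [this]
  have : p.map (fun pr => ({pr.2} : Multiset X))
      = (p.map Prod.snd).map (fun x => ({x} : Multiset X)) := by
    rw [Multiset.map_map]; rfl
  rw [this, Multiset.sum_map_singleton]

/-- two distinct letters of a tuple have no common descendant -/
private theorem no_common_descendant [DecidableEq X] {r : Rel X} (ht : IsTree r) {ts : Multiset X} {e f t t' : X}
    (hts : r ts e) (htm : t ∈ ts) (htm' : t' ∈ ts) (hne : t ≠ t')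
    (h1 : descends r f t) (h2 : descends r f t') : False := by
  obtain ⟨⟨⟨hrefl, hb⟩, _⟩, _, hsimple, _, _⟩ := id ht
  obtain ⟨a, ha, hfa⟩ := h1
  obtain ⟨b, hbb, hfb⟩ := h2
  have hA : r (a + ts.erase t) e := subst_one hrefl hb hts htm ha
  have ht'e : t' ∈ ts.erase t := (Multiset.mem_erase_of_ne (Ne.symm hne)).2 htm'
  by_cases hft' : f = t'
  · subst hft'
    exact mem_mem_not_nodup hfa ht'e (hsimple _ _ hA)
  · have hB : r (b + (a + ts.erase t).erase t') e :=
      subst_one hrefl hb hA (Multiset.mem_add.2 (Or.inr ht'e)) hbb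
    have hfmem : f ∈ (a + ts.erase t).erase t' :=
      (Multiset.mem_erase_of_ne hft').2 (Multiset.mem_add.2 (Or.inl hfa))
    exact mem_mem_not_nodup hfb hfmem (hsimple _ _ hB)


private theorem btrans_map {r : Rel X} (hb : BTrans r) {ts : Multiset X} {e : X}
    (g : X → Multiset X) (hts : r ts e) (hg : ∀ t ∈ ts, r (g t) t) :
    r ((ts.map g).sum) e := by
  have key := hb (ts.map fun t => (g t, t)) e
  rw [Multiset.map_map, Multiset.map_map] at key
  have h1 : ts.map (Prod.snd ∘ fun t => (g t, t)) = ts := Multiset.map_id' ts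
  have h2 : ts.map (Prod.fst ∘ fun t => (g t, t)) = ts.map g := rfl
  rw [h1, h2] at key
  apply key hts
  intro q hq
  obtain ⟨t, htm, rfl⟩ := Multiset.mem_map.1 hq
  exact hg t htm

private theorem exists_lam {r : Rel X} (ht : IsTree r) (e : X) :
    ∃ ls : Multiset X,
      (r ls e ∧ ∀ gs, r gs e → tupleLE r ls gs) ∧
      ls.Nodup ∧ ∀ l, l ∈ ls ↔ IsLeaf r l ∧ descends r l e := by
  classical
  obtain ⟨⟨⟨hrefl, hb⟩, _⟩, _, hsimple, hnode, _⟩ := id ht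
  refine (sdes_wf ht).induction (C := fun e => ∃ ls : Multiset X,
    (r ls e ∧ ∀ gs, r gs e → tupleLE r ls gs) ∧
      ls.Nodup ∧ ∀ l, l ∈ ls ↔ IsLeaf r l ∧ descends r l e) e ?_
  intro e IH
  rcases hnode e with hleaf | ⟨ts, ⟨hts, htsne⟩, hmax⟩
  · refine ⟨{e}, ⟨hrefl e, ?_⟩, Multiset.nodup_singleton e, ?_⟩
    · intro gs hgs
      have hgse : gs = {e} := by
        by_contra hne; exact hleaf ⟨gs, hgs, hne⟩
      rw [hgse]; exact tupleLE_singleton (hrefl e)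
    · intro l
      constructor
      · intro hl
        rw [Multiset.mem_singleton] at hl; subst hl
        exact ⟨hleaf, descends_refl hrefl l⟩
      · rintro ⟨hll, gs, hgs, hlgs⟩
        have hgse : gs = {e} := by
          by_contra hne; exact hleaf ⟨gs, hgs, hne⟩
        rw [hgse] at hlgs; simpa using hlgs
  · have hstrict : ∀ t ∈ ts, descends r t e ∧ t ≠ e := fun t htm =>
      ⟨⟨ts, hts, htm⟩, strict_of_ne ht hts htm htsne⟩
    set g : X → Multiset X := fun t =>
      if h : descends r t e ∧ t ≠ e then (IH t h).choose else 0 with hgdef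
    have hg : ∀ t ∈ ts, (r (g t) t ∧ ∀ gs, r gs t → tupleLE r (g t) gs) ∧
        (g t).Nodup ∧ ∀ l, l ∈ g t ↔ IsLeaf r l ∧ descends r l t := by
      intro t htm
      have h := hstrict t htm
      simp only [hgdef, dif_pos h]
      exact (IH t h).choose_spec
    have hrel : r ((ts.map g).sum) e := btrans_map hb g hts (fun t htm => (hg t htm).1.1)
    refine ⟨(ts.map g).sum, ⟨hrel, ?_⟩, hsimple _ _ hrel, ?_⟩
    · intro gs hgs
      by_cases hgse : gs = {e}
      · rw [hgse]; exact tupleLE_singleton hrel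
      · obtain ⟨p, hsnd, hfst, hprel⟩ := hmax gs hgs hgse
        have key := tupleLE_join (r := r) (p.map fun pr => (g pr.2, pr.1)) ?_
        · rw [Multiset.map_map, Multiset.map_map] at key
          have hh1 : p.map (Prod.fst ∘ fun pr => (g pr.2, pr.1)) = (p.map Prod.snd).map g := by
            rw [Multiset.map_map]; rfl
          have hh2 : p.map (Prod.snd ∘ fun pr => (g pr.2, pr.1)) = p.map Prod.fst := rfl
          rw [hh1, hh2, hsnd, hfst] at key
          exact key
        · intro pr hpr
          obtain ⟨q, hqm, rfl⟩ := Multiset.mem_map.1 hpr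
          have hq2 : q.2 ∈ ts := hsnd ▸ Multiset.mem_map_of_mem Prod.snd hqm
          exact ((hg q.2 hq2).1.2) q.1 (hprel q hqm)
    · intro l
      constructor
      · intro hl
        obtain ⟨m, hm, hlm⟩ := msum_mem.1 hl
        obtain ⟨t, htm, rfl⟩ := Multiset.mem_map.1 hm
        obtain ⟨hleafl, hdl⟩ := ((hg t htm).2.2 l).1 hlm
        exact ⟨hleafl, descends_trans hrefl hb hdl (hstrict t htm).1⟩
      · rintro ⟨hll, gs, hgs, hlgs⟩
        by_cases hgse : gs = {e}
        · exfalso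
          rw [hgse, Multiset.mem_singleton] at hlgs; subst hlgs
          exact hll ⟨ts, hts, htsne⟩
        · obtain ⟨p, hsnd, hfst, hprel⟩ := hmax gs hgs hgse
          rw [← hfst] at hlgs
          obtain ⟨m, hm, hlm⟩ := msum_mem.1 hlgs
          obtain ⟨q, hqm, rfl⟩ := Multiset.mem_map.1 hm
          have hq2 : q.2 ∈ ts := hsnd ▸ Multiset.mem_map_of_mem Prod.snd hqm
          have hdl : descends r l q.2 := ⟨q.1, hprel q hqm, hlm⟩
          exact msum_mem.2 ⟨g q.2, Multiset.mem_map_of_mem g hq2,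
            ((hg q.2 hq2).2.2 l).2 ⟨hll, hdl⟩⟩


/-- In a tree, each edge `e` has a minimum tuple `e^λ ≤ e`,
consisting exactly of the leaves `l ≤_d e`; moreover `f₁ ⋯ fₙ ≤ e` holds iff
all `fᵢ ≤_d e`, the `fᵢ` are pairwise `≤_d`-incomparable, and
`f₁^λ ⋯ fₙ^λ = e^λ`. -/
theorem stmt4 {X : Type u} (r : Rel X) (ht : IsTree r) :
    (∀ e : X, ∃ ls : Multiset X,
      (r ls e ∧ ∀ gs, r gs e → tupleLE r ls gs) ∧
      ls.Nodup ∧ ∀ l, l ∈ ls ↔ IsLeaf r l ∧ descends r l e) ∧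
    (∀ lam : X → Multiset X,
      (∀ x, r (lam x) x ∧ ∀ gs, r gs x → tupleLE r (lam x) gs) →
      ∀ fs e, (r fs e ↔
        (∀ f ∈ fs, descends r f e) ∧ fs.Pairwise (Incomp r) ∧
          (fs.map lam).sum = lam e)) := by
  classical
  obtain ⟨⟨⟨hrefl, hb⟩, _⟩, _, hsimple, hnode, _⟩ := id ht
  refine ⟨fun e => exists_lam ht e, ?_⟩
  intro lam hlam
  have hspec : ∀ x, (r (lam x) x ∧ ∀ gs, r gs x → tupleLE r (lam x) gs) ∧
      (lam x).Nodup ∧ ∀ l, l ∈ lam x ↔ IsLeaf r l ∧ descends r l x := by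
    intro x
    obtain ⟨ls, hl1, hl2, hl3⟩ := exists_lam ht x
    have hx : lam x = ls :=
      tupleLE_leaves (fun l hl => ((hl3 l).1 hl).1) ((hlam x).2 ls hl1.1)
    rw [hx]; exact ⟨hl1, hl2, hl3⟩
  have hback : ∀ e fs, (∀ f ∈ fs, descends r f e) → fs.Pairwise (Incomp r) →
      (fs.map lam).sum = lam e → r fs e := by
    intro e
    refine (sdes_wf ht).induction (C := fun e => ∀ fs,
      (∀ f ∈ fs, descends r f e) → fs.Pairwise (Incomp r) →
      (fs.map lam).sum = lam e → r fs e) e ?_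
    intro e IH fs h1 h2 h3
    have hpair : ∀ ⦃a⦄, a ∈ fs → ∀ ⦃b⦄, b ∈ fs → a ≠ b → Incomp r a b :=
      by haveI : Std.Symm (Incomp r) := ⟨fun a b hab => ⟨hab.2, hab.1⟩⟩; exact Multiset.Pairwise.forall h2
    have hnd : fs.Nodup := by
      obtain ⟨l, hfl, hp⟩ := id h2
      rw [hfl]
      refine Multiset.coe_nodup.2 (List.Pairwise.imp ?_ hp)
      intro a b hr heq
      exact absurd (descends_refl hrefl b) (heq ▸ hr.1)
    rcases hnode e with hleaf | ⟨ts, ⟨hts, htsne⟩, hmax⟩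
    · -- leaf case
      have hfe : ∀ f ∈ fs, f = e := by
        intro f hf
        obtain ⟨gs, hgs, hfg⟩ := h1 f hf
        have hgse : gs = {e} := by by_contra hne; exact hleaf ⟨gs, hgs, hne⟩
        rw [hgse, Multiset.mem_singleton] at hfg; exact hfg
      have hlame : lam e = {e} := by
        refine (Multiset.Nodup.ext (hspec e).2.1 (Multiset.nodup_singleton e)).2 ?_
        intro l
        rw [Multiset.mem_singleton]
        constructor
        · intro hl
          obtain ⟨_, gs, hgs, hlg⟩ := ((hspec e).2.2 l).1 hl
          have hgse : gs = {e} := by by_contra hne; exact hleaf ⟨gs, hgs, hne⟩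
          rw [hgse, Multiset.mem_singleton] at hlg; exact hlg
        · intro hle
          rw [hle]
          exact ((hspec e).2.2 e).2 ⟨hleaf, descends_refl hrefl e⟩
      rcases fs.empty_or_exists_mem with h0 | ⟨f, hf⟩
      · exfalso
        rw [h0, hlame] at h3
        simp at h3
      · have hef : e ∈ fs := hfe f hf ▸ hf
        have hfs : fs = {e} := by
          have h4 := Multiset.cons_erase hef
          rcases (fs.erase e).empty_or_exists_mem with h0 | ⟨x, hx⟩
          · rw [← h4, h0]; rfl
          · exfalso
            have hxe : x = e := hfe x (Multiset.mem_of_mem_erase hx)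
            have hcnt : Multiset.count e (fs.erase e) = 0 := by
              rw [Multiset.count_erase_self, Multiset.count_eq_one_of_mem hnd hef]
            exact (Multiset.count_eq_zero.1 hcnt) (hxe ▸ hx)
        rw [hfs]; exact hrefl e
    · -- node case
      by_cases hef : e ∈ fs
      · have hfs : fs = {e} := by
          have h4 := Multiset.cons_erase hef
          rcases (fs.erase e).empty_or_exists_mem with h0 | ⟨x, hx⟩
          · rw [← h4, h0]; rfl
          · exfalso
            have hxfs : x ∈ fs := Multiset.mem_of_mem_erase hx
            have hxe : x ≠ e := by
              rintro rfl
              have hcnt : Multiset.count x (fs.erase x) = 0 := by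
                rw [Multiset.count_erase_self, Multiset.count_eq_one_of_mem hnd hef]
              exact (Multiset.count_eq_zero.1 hcnt) hx
            exact (hpair hxfs hef hxe).1 (h1 x hxfs)
        rw [hfs]; exact hrefl e
      · have hsub : ∀ f ∈ fs, ∃ t ∈ ts, descends r f t := by
          intro f hf
          obtain ⟨gs, hgs, hfg⟩ := h1 f hf
          have hgse : gs ≠ {e} := by
            rintro rfl
            rw [Multiset.mem_singleton] at hfg; subst hfg; exact hef hf
          obtain ⟨p, hsnd, hfst, hprel⟩ := hmax gs hgs hgse
          rw [← hfst] at hfg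
          obtain ⟨m, hm, hfm⟩ := msum_mem.1 hfg
          obtain ⟨q, hqm, rfl⟩ := Multiset.mem_map.1 hm
          exact ⟨q.2, hsnd ▸ Multiset.mem_map_of_mem Prod.snd hqm, ⟨q.1, hprel q hqm, hfm⟩⟩
        have huniq : ∀ f : X, ∀ t ∈ ts, ∀ t' ∈ ts,
            descends r f t → descends r f t' → t = t' := by
          intro f t htm t' htm' hd hd'
          by_contra hne
          exact no_common_descendant ht hts htm htm' hne hd hd'
        have hsplit : (ts.map (fun t => fs.filter (fun f => descends r f t))).sum = fs := by
          refine Multiset.ext.2 ?_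
          intro a
          rw [Multiset.count_sum]
          by_cases ha : a ∈ fs
          · obtain ⟨t0, ht0, hd0⟩ := hsub a ha
            have hmapeq : ts.map
                  (fun t => Multiset.count a (fs.filter (fun f => descends r f t)))
                = ts.map (fun t => if t = t0 then 1 else 0) := by
              refine Multiset.map_congr rfl ?_
              intro t htm
              rw [Multiset.count_filter]
              by_cases hd : descends r a t
              · rw [if_pos hd, if_pos (huniq a t htm t0 ht0 hd hd0),
                  Multiset.count_eq_one_of_mem hnd ha]
              · rw [if_neg hd, if_neg (by rintro rfl; exact hd hd0)]
            rw [hmapeq, sum_ite_eq_count,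
              Multiset.count_eq_one_of_mem (hsimple _ _ hts) ht0,
              Multiset.count_eq_one_of_mem hnd ha]
          · have hmapeq : ts.map
                  (fun t => Multiset.count a (fs.filter (fun f => descends r f t)))
                = ts.map (fun _ => (0 : ℕ)) := by
              refine Multiset.map_congr rfl fun t _ => ?_
              rw [Multiset.count_filter, Multiset.count_eq_zero.2 ha, ite_self]
            rw [hmapeq, Multiset.count_eq_zero.2 ha]
            simp
        have hFt : ∀ t ∈ ts, r (fs.filter (fun f => descends r f t)) t := by
          intro t htm
          refine IH t ⟨⟨ts, hts, htm⟩, strict_of_ne ht hts htm htsne⟩ _ ?_ ?_ ?_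
          · intro f hf; exact (Multiset.mem_filter.1 hf).2
          · refine Multiset.Nodup.pairwise ?_ (Multiset.Nodup.filter _ hnd)
            intro a ha b hb hne
            exact hpair (Multiset.mem_of_mem_filter ha) (Multiset.mem_of_mem_filter hb) hne
          · refine (Multiset.Nodup.ext ?_ (hspec t).2.1).2 ?_
            · have hle : (((fs.filter (fun f => descends r f t)).map lam)).sum
                  ≤ (fs.map lam).sum :=
                msum_le (Multiset.map_le_map (Multiset.filter_le _ fs))
              rw [h3] at hle
              exact Multiset.nodup_of_le hle (hspec e).2.1
            · intro l
              constructor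
              · intro hl
                obtain ⟨m, hm, hlm⟩ := msum_mem.1 hl
                obtain ⟨f, hfm, rfl⟩ := Multiset.mem_map.1 hm
                obtain ⟨hleafl, hdl⟩ := ((hspec f).2.2 l).1 hlm
                exact ((hspec t).2.2 l).2
                  ⟨hleafl, descends_trans hrefl hb hdl (Multiset.mem_filter.1 hfm).2⟩
              · intro hl
                obtain ⟨hleafl, hdlt⟩ := ((hspec t).2.2 l).1 hl
                have hdle : descends r l e := descends_trans hrefl hb hdlt ⟨ts, hts, htm⟩
                have hle2 : l ∈ (fs.map lam).sum := by
                  rw [h3]; exact ((hspec e).2.2 l).2 ⟨hleafl, hdle⟩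
                obtain ⟨m, hm, hlm⟩ := msum_mem.1 hle2
                obtain ⟨f, hfm, rfl⟩ := Multiset.mem_map.1 hm
                have hdlf : descends r l f := (((hspec f).2.2 l).1 hlm).2
                obtain ⟨t', ht', hdft'⟩ := hsub f hfm
                have hdlt' : descends r l t' := descends_trans hrefl hb hdlf hdft'
                have htt : t' = t := huniq l t' ht' t htm hdlt' hdlt
                subst htt
                exact msum_mem.2 ⟨lam f, Multiset.mem_map_of_mem lam
                  (Multiset.mem_filter.2 ⟨hfm, hdft'⟩), hlm⟩
        have hfin := btrans_map hb (fun t => fs.filter (fun f => descends r f t)) hts hFt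
        rwa [hsplit] at hfin
  intro fs e
  constructor
  · intro h
    refine ⟨fun f hf => ⟨fs, h, hf⟩, ?_, ?_⟩
    · have hnd : fs.Nodup := hsimple _ _ h
      have hkey : ∀ a ∈ fs, ∀ b ∈ fs, a ≠ b → ¬ descends r a b := by
        rintro a ha b hbm hne ⟨gs, hgs, hags⟩
        have h4 : r (gs + fs.erase b) e := subst_one hrefl hb h hbm hgs
        exact mem_mem_not_nodup hags ((Multiset.mem_erase_of_ne hne).2 ha)
          (hsimple _ _ h4)
      exact Multiset.Nodup.pairwise
        (fun a ha b hb hne => ⟨hkey a ha b hb hne, hkey b hb a ha hne.symm⟩) hnd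
    · have hL : r ((fs.map lam).sum) e := btrans_map hb lam h (fun f _ => (hspec f).1.1)
      refine (Multiset.Nodup.ext (hsimple _ _ hL) ((hspec e).2.1)).2 ?_
      intro l
      constructor
      · intro hl
        obtain ⟨m, hm, hlm⟩ := msum_mem.1 hl
        obtain ⟨f, hfm, rfl⟩ := Multiset.mem_map.1 hm
        obtain ⟨hleafl, hdl⟩ := ((hspec f).2.2 l).1 hlm
        exact ((hspec e).2.2 l).2 ⟨hleafl, descends_trans hrefl hb hdl ⟨fs, h, hfm⟩⟩
      · intro hl
        obtain ⟨hleafl, _⟩ := ((hspec e).2.2 l).1 hl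
        obtain ⟨p, hsnd, hfst, hprel⟩ := (hspec e).1.2 fs h
        rw [← hfst] at hl
        obtain ⟨m, hm, hlm⟩ := msum_mem.1 hl
        obtain ⟨q, hqm, rfl⟩ := Multiset.mem_map.1 hm
        have hq2 : q.2 ∈ fs := hsnd ▸ Multiset.mem_map_of_mem Prod.snd hqm
        refine msum_mem.2 ⟨lam q.2, Multiset.mem_map_of_mem lam hq2, ?_⟩
        exact ((hspec q.2).2.2 l).2 ⟨hleafl, ⟨q.1, hprel q hqm, hlm⟩⟩
  · rintro ⟨h1, h2, h3⟩
    exact hback e fs h1 h2 h3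


end BroadPaper
end

section
/- Let T and U be trees, let v be simultaneously a leaf of T and the root of U. Then the pushout (as pre-broad posets) T ⨿_v U of the span T ← η → U, where η is the one-edge tree mapping to v in both T and U, is again a tree. Its broad relations are exactly: (i) relations of T, (ii) relations of U, and (iii) relations t̲ u̲ ≤ t for which t̲ v ≤ t in T and u̲ ≤ v in U. -/
universe u

namespace BroadPaper

/-- The underlying set of the grafting `T ⨿_v U`: the pushout of sets. -/
abbrev GraftSet (A B : Type u) (vU : B) : Type u := A ⊕ {b : B // b ≠ vU}

/-- The canonical map `U → T ⨿_v U`, sending the root `vU` of `U` to the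
leaf `vT` of `T`. -/
noncomputable def iotaU {A B : Type u} (vT : A) (vU : B) (b : B) :
    GraftSet A B vU :=
  haveI := Classical.dec (b = vU)
  if h : b = vU then Sum.inl vT else Sum.inr ⟨b, h⟩

/-- The grafting relation: (i) relations of `T`, (ii) relations of `U`, and
(iii) composites `t̲ u̲ ≤ t` with `t̲ v ≤ t` in `T` and `u̲ ≤ v` in `U`. -/
def graftRel {A B : Type u} (rT : Rel A) (rU : Rel B) (vT : A) (vU : B) :
    Rel (GraftSet A B vU) := fun xs x =>
  (∃ ts t, rT ts t ∧ xs = ts.map Sum.inl ∧ x = Sum.inl t) ∨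
  (∃ us u, rU us u ∧ xs = us.map (iotaU vT vU) ∧ x = iotaU vT vU u) ∨
  (∃ ts t us, rT (vT ::ₘ ts) t ∧ rU us vU ∧
    xs = ts.map Sum.inl + us.map (iotaU vT vU) ∧ x = Sum.inl t)

section GraftLemmas

variable {A B : Type u} {rT : Rel A} {rU : Rel B} {vT : A} {vU : B}

lemma sum_map_map (f : X → Y) (p : Multiset (Multiset X)) :
    (p.map (Multiset.map f)).sum = p.sum.map f := by
  induction p using Multiset.induction with
  | empty => simp
  | cons a s ih => simp [ih]

lemma map_eq_add_split (f : X → Y) :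
    ∀ (t1 : Multiset Y) (s : Multiset X) (t2 : Multiset Y), s.map f = t1 + t2 →
    ∃ s1 s2, s = s1 + s2 ∧ s1.map f = t1 ∧ s2.map f = t2 := by
  intro t1
  induction t1 using Multiset.induction with
  | empty => intro s t2 h; exact ⟨0, s, by simp, by simp, by simpa using h⟩
  | cons b t1 ih =>
    intro s t2 h
    have hb : b ∈ s.map f := by rw [h]; simp
    obtain ⟨a, ha, rfl⟩ := Multiset.mem_map.mp hb
    obtain ⟨s', rfl⟩ := Multiset.exists_cons_of_mem ha
    rw [Multiset.map_cons, Multiset.cons_add] at h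
    have h' : s'.map f = t1 + t2 := (Multiset.cons_inj_right _).mp h
    obtain ⟨s1, s2, rfl, h1, h2⟩ := ih s' t2 h'
    exact ⟨a ::ₘ s1, s2, by rw [Multiset.cons_add], by rw [Multiset.map_cons, h1], h2⟩

lemma add_eq_singleton {s t : Multiset X} {x : X} (h : s + t = {x}) :
    (s = {x} ∧ t = 0) ∨ (s = 0 ∧ t = {x}) := by
  have hc : Multiset.card s + Multiset.card t = 1 := by
    rw [← Multiset.card_add, h]; simp
  rcases Nat.add_eq_one_iff.mp hc with ⟨hs, ht⟩ | ⟨hs, ht⟩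
  · right
    have hs0 : s = 0 := Multiset.card_eq_zero.mp hs
    exact ⟨hs0, by simpa [hs0] using h⟩
  · left
    have ht0 : t = 0 := Multiset.card_eq_zero.mp ht
    exact ⟨by simpa [ht0] using h, ht0⟩

lemma eq_singleton_of_mem {r : Rel X} (hpb : IsPreBroad r) (hs : Simple r)
    {fs : Multiset X} {e : X} (h : r fs e) (he : e ∈ fs) : fs = {e} := by
  obtain ⟨rest, rfl⟩ := Multiset.exists_cons_of_mem he
  by_contra hne
  have hrest : rest ≠ 0 := fun h0 => hne (by simp [h0])
  obtain ⟨x0, hx0⟩ := Multiset.exists_mem_of_ne_zero hrest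
  have hbig : r ((e ::ₘ rest) + rest) e := by
    have := hpb.2 ((e ::ₘ rest, e) ::ₘ rest.map (fun x => ({x}, x))) e ?_ ?_
    · simpa [Multiset.map_map, Multiset.sum_map_singleton] using this
    · simpa [Multiset.map_map] using h
    · rintro q hq
      rcases Multiset.mem_cons.mp hq with rfl | hq
      · exact h
      · obtain ⟨x, _, rfl⟩ := Multiset.mem_map.mp hq
        exact hpb.1 x
  have hnd := hs _ _ hbig
  rw [Multiset.nodup_add] at hnd
  exact (Multiset.disjoint_left.mp hnd.2.2 (Multiset.mem_cons_of_mem hx0)) hx0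

lemma iotaU_root : iotaU vT vU vU = Sum.inl vT := by
  unfold iotaU; exact dif_pos rfl

lemma iotaU_ne {b : B} (h : b ≠ vU) : iotaU vT vU b = Sum.inr ⟨b, h⟩ := by
  unfold iotaU; exact dif_neg h

lemma iotaU_eq_inl {b : B} {a : A} (h : iotaU vT vU b = Sum.inl a) :
    b = vU ∧ a = vT := by
  by_cases hb : b = vU
  · subst hb; rw [iotaU_root] at h
    exact ⟨rfl, (Sum.inl.inj h).symm⟩
  · rw [iotaU_ne hb] at h; exact absurd h (by simp)

lemma iotaU_inj : Function.Injective (iotaU vT vU) := by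
  intro b b' h
  by_cases hb : b = vU <;> by_cases hb' : b' = vU
  · rw [hb, hb']
  · subst hb; rw [iotaU_root, iotaU_ne hb'] at h; exact absurd h (by simp)
  · subst hb'; rw [iotaU_root, iotaU_ne hb] at h; exact absurd h (by simp)
  · rw [iotaU_ne hb, iotaU_ne hb'] at h
    exact Subtype.mk_eq_mk.mp (Sum.inr.inj h)

lemma graft_ofT {ts : Multiset A} {t : A} (h : rT ts t) :
    graftRel rT rU vT vU (ts.map Sum.inl) (Sum.inl t) :=
  Or.inl ⟨ts, t, h, rfl, rfl⟩

lemma graft_ofU {us : Multiset B} {u : B} (h : rU us u) :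
    graftRel rT rU vT vU (us.map (iotaU vT vU)) (iotaU vT vU u) :=
  Or.inr (Or.inl ⟨us, u, h, rfl, rfl⟩)

lemma graft_mix {ts : Multiset A} {t : A} {us : Multiset B}
    (h1 : rT (vT ::ₘ ts) t) (h2 : rU us vU) :
    graftRel rT rU vT vU (ts.map Sum.inl + us.map (iotaU vT vU)) (Sum.inl t) :=
  Or.inr (Or.inr ⟨ts, t, us, h1, h2, rfl, rfl⟩)

lemma claimA (hTr : ∀ e, rT {e} e) {xs : Multiset (GraftSet A B vU)} {s : A}
    (h : graftRel rT rU vT vU xs (Sum.inl s)) :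
    ∃ ss us, xs = ss.map Sum.inl + us.map (iotaU vT vU) ∧
      ((us = 0 ∧ rT ss s) ∨ (rT (vT ::ₘ ss) s ∧ rU us vU)) := by
  rcases h with ⟨ts, t, h, rfl, ht⟩ | ⟨us, u, h, rfl, ht⟩ | ⟨ts, t, us, h1, h2, rfl, ht⟩
  · exact ⟨ts, 0, by simp, Or.inl ⟨rfl, (Sum.inl.inj ht) ▸ h⟩⟩
  · obtain ⟨hb, ha⟩ := iotaU_eq_inl ht.symm
    refine ⟨0, us, by simp, Or.inr ⟨by rw [ha]; simpa using hTr vT, hb ▸ h⟩⟩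
  · exact ⟨ts, us, rfl, Or.inr ⟨(Sum.inl.inj ht) ▸ h1, h2⟩⟩

lemma claimB (hTleaf : IsLeaf rT vT) (hTr : ∀ e, rT {e} e) (hUr : ∀ e, rU {e} e)
    {xs : Multiset (GraftSet A B vU)} {u : B}
    (h : graftRel rT rU vT vU xs (iotaU vT vU u)) :
    ∃ ws, xs = ws.map (iotaU vT vU) ∧ rU ws u := by
  by_cases hu : u = vU
  · rw [hu, iotaU_root] at h
    obtain ⟨ss, us, rfl, hcase⟩ := claimA hTr h
    rcases hcase with ⟨rfl, hss⟩ | ⟨h1, h2⟩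
    · have hssv : ss = {vT} := by
        by_contra hne; exact hTleaf ⟨ss, hss, hne⟩
      subst hssv
      refine ⟨{vU}, by simp [iotaU_root], by rw [hu]; exact hUr vU⟩
    · have hv : vT ::ₘ ss = {vT} := by
        by_contra hne; exact hTleaf ⟨_, h1, hne⟩
      have hss : ss = 0 :=
        (Multiset.cons_inj_right vT).mp (hv.trans (Multiset.cons_zero vT).symm)
      subst hss
      exact ⟨us, by simp, by rw [hu]; exact h2⟩
  · rw [iotaU_ne hu] at h
    rcases h with ⟨ts, t, h, rfl, ht⟩ | ⟨us, u', h, rfl, ht⟩ | ⟨ts, t, us, h1, h2, rfl, ht⟩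
    · exact absurd ht (by simp)
    · have : u' = u := iotaU_inj (by rw [← ht, iotaU_ne hu])
      exact ⟨us, rfl, this ▸ h⟩
    · exact absurd ht (by simp)

end GraftLemmas

section Agg

variable {A B : Type u} {rT : Rel A} {rU : Rel B} {vT : A} {vU : B}

lemma aggT (hTr : ∀ e, rT {e} e) :
    ∀ (p : Multiset (Multiset (GraftSet A B vU) × GraftSet A B vU)) (ts : Multiset A),
    p.map Prod.snd = ts.map Sum.inl →
    (∀ q ∈ p, graftRel rT rU vT vU q.1 q.2) →
    ∃ (pA : Multiset (Multiset A × A)) (SS : Multiset A) (USs : Multiset (Multiset B)),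
      pA.map Prod.snd = ts ∧ (∀ q ∈ pA, rT q.1 q.2) ∧
      (pA.map Prod.fst).sum = Multiset.replicate (Multiset.card USs) vT + SS ∧
      (∀ us ∈ USs, rU us vU) ∧
      (p.map Prod.fst).sum = SS.map Sum.inl + USs.sum.map (iotaU vT vU) := by
  intro p
  induction p using Multiset.induction with
  | empty =>
    intro ts h _
    have hts : ts = 0 := Multiset.map_eq_zero.mp (show ts.map (Sum.inl : A → GraftSet A B vU) = 0 by simpa using h.symm)
    subst hts
    exact ⟨0, 0, 0, by simp, by simp, by simp, by simp, by simp⟩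
  | cons q p ih =>
    intro ts h hall
    have hmem : q.2 ∈ ts.map Sum.inl := by rw [← h]; simp
    obtain ⟨s, hs, hq2⟩ := Multiset.mem_map.mp hmem
    obtain ⟨ts', rfl⟩ := Multiset.exists_cons_of_mem hs
    have hsnd : p.map Prod.snd = ts'.map Sum.inl := by
      have h2 : q.2 ::ₘ p.map Prod.snd = Sum.inl s ::ₘ ts'.map Sum.inl := by
        simpa using h
      rw [← hq2] at h2
      exact (Multiset.cons_inj_right _).mp h2
    obtain ⟨pA, SS, USs, h1, h2, h3, h4, h5⟩ :=
      ih ts' hsnd (fun q' hq' => hall q' (Multiset.mem_cons_of_mem hq'))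
    have hq : graftRel rT rU vT vU q.1 (Sum.inl s) := by
      rw [hq2]; exact hall q (Multiset.mem_cons_self q p)
    obtain ⟨ss, us, hq1, hcase⟩ := claimA hTr hq
    rcases hcase with ⟨rfl, hss⟩ | ⟨hss, hus⟩
    · refine ⟨(ss, s) ::ₘ pA, ss + SS, USs, by simp [h1], ?_, ?_, h4, ?_⟩
      · intro q' hq'
        rcases Multiset.mem_cons.mp hq' with rfl | hq'
        · exact hss
        · exact h2 q' hq'
      · simp only [Multiset.map_cons, Multiset.sum_cons, h3]
        rw [add_left_comm]
      · simp only [Multiset.map_cons, Multiset.sum_cons, h5, hq1, Multiset.map_add]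
        simp only [Multiset.map_zero, add_zero]
        rw [add_assoc]
    · refine ⟨(vT ::ₘ ss, s) ::ₘ pA, ss + SS, us ::ₘ USs, by simp [h1], ?_, ?_, ?_, ?_⟩
      · intro q' hq'
        rcases Multiset.mem_cons.mp hq' with rfl | hq'
        · exact hss
        · exact h2 q' hq'
      · simp only [Multiset.map_cons, Multiset.sum_cons, h3, Multiset.card_cons,
          Multiset.replicate_succ, Multiset.cons_add]
        rw [add_left_comm]
      · intro us' hus'
        rcases Multiset.mem_cons.mp hus' with rfl | hus'
        · exact hus
        · exact h4 us' hus'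
      · simp only [Multiset.map_cons, Multiset.sum_cons, h5, hq1, Multiset.map_add]
        rw [add_add_add_comm]

lemma aggU (hTleaf : IsLeaf rT vT) (hTr : ∀ e, rT {e} e) (hUr : ∀ e, rU {e} e) :
    ∀ (p : Multiset (Multiset (GraftSet A B vU) × GraftSet A B vU)) (us : Multiset B),
    p.map Prod.snd = us.map (iotaU vT vU) →
    (∀ q ∈ p, graftRel rT rU vT vU q.1 q.2) →
    ∃ pB : Multiset (Multiset B × B), pB.map Prod.snd = us ∧ (∀ q ∈ pB, rU q.1 q.2) ∧
      (p.map Prod.fst).sum = ((pB.map Prod.fst).sum).map (iotaU vT vU) := by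
  intro p
  induction p using Multiset.induction with
  | empty =>
    intro us h _
    have hus : us = 0 := Multiset.map_eq_zero.mp (show us.map (iotaU vT vU) = 0 by simpa using h.symm)
    subst hus
    exact ⟨0, by simp, by simp, by simp⟩
  | cons q p ih =>
    intro us h hall
    have hmem : q.2 ∈ us.map (iotaU vT vU) := by rw [← h]; simp
    obtain ⟨w, hw, hq2⟩ := Multiset.mem_map.mp hmem
    obtain ⟨us', rfl⟩ := Multiset.exists_cons_of_mem hw
    have hsnd : p.map Prod.snd = us'.map (iotaU vT vU) := by
      have h2 : q.2 ::ₘ p.map Prod.snd = iotaU vT vU w ::ₘ us'.map (iotaU vT vU) := by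
        simpa using h
      rw [← hq2] at h2
      exact (Multiset.cons_inj_right _).mp h2
    obtain ⟨pB, h1, h2, h3⟩ :=
      ih us' hsnd (fun q' hq' => hall q' (Multiset.mem_cons_of_mem hq'))
    have hq : graftRel rT rU vT vU q.1 (iotaU vT vU w) := by
      rw [hq2]; exact hall q (Multiset.mem_cons_self q p)
    obtain ⟨ws, hq1, hws⟩ := claimB hTleaf hTr hUr hq
    refine ⟨(ws, w) ::ₘ pB, by simp [h1], ?_, ?_⟩
    · intro q' hq'
      rcases Multiset.mem_cons.mp hq' with rfl | hq'
      · exact hws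
      · exact h2 q' hq'
    · simp only [Multiset.map_cons, Multiset.sum_cons, h3, hq1, Multiset.map_add]

end Agg

section PreBroad

variable {A B : Type u} {rT : Rel A} {rU : Rel B} {vT : A} {vU : B}

lemma graft_refl (hTr : ∀ e, rT {e} e) (hUr : ∀ e, rU {e} e) :
    ∀ x : GraftSet A B vU, graftRel rT rU vT vU {x} x := by
  intro x
  cases x with
  | inl a => simpa using graft_ofT (rU := rU) (vU := vU) (hTr a)
  | inr b => simpa [iotaU_ne b.2] using graft_ofU (rT := rT) (vT := vT) (vU := vU) (hUr b.1)

lemma graft_btrans (hTpre : IsPreBroad rT) (hUpre : IsPreBroad rU)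
    (hTsimp : Simple rT) (hleaf : IsLeaf rT vT) :
    BTrans (graftRel rT rU vT vU) := by
  classical
  intro p e htop hall
  rcases htop with ⟨ts, t, h, hsnd, rfl⟩ | ⟨us, u, h, hsnd, rfl⟩ | ⟨ts, t, us, h1, h2, hsnd, rfl⟩
  · obtain ⟨pA, SS, USs, g1, g2, g3, g4, g5⟩ := aggT hTpre.1 p ts hsnd hall
    have hcomp : rT (Multiset.replicate (Multiset.card USs) vT + SS) t := by
      rw [← g3]; exact hTpre.2 pA t (by rw [g1]; exact h) g2
    have hnd := hTsimp _ _ hcomp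
    have hcount := Multiset.nodup_iff_count_le_one.mp hnd vT
    rw [Multiset.count_add, Multiset.count_replicate_self] at hcount
    have hk : Multiset.card USs ≤ 1 := by omega
    rcases Nat.le_one_iff_eq_zero_or_eq_one.mp hk with hk0 | hk1
    · have hUSs : USs = 0 := Multiset.card_eq_zero.mp hk0
      subst hUSs
      rw [g5]
      have hSS : rT SS t := by simpa using hcomp
      simpa using graft_ofT (rU := rU) (vU := vU) hSS
    · obtain ⟨us0, hus0⟩ := Multiset.card_eq_one.mp hk1
      subst hus0
      rw [g5]
      have hSS : rT (vT ::ₘ SS) t := by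
        simpa [Multiset.replicate_succ, Multiset.cons_add] using hcomp
      simpa using graft_mix hSS (g4 us0 (by simp))
  · obtain ⟨pB, g1, g2, g3⟩ := aggU hleaf hTpre.1 hUpre.1 p us hsnd hall
    have hcomp : rU ((pB.map Prod.fst).sum) u :=
      hUpre.2 pB u (by rw [g1]; exact h) g2
    rw [g3]
    exact graft_ofU hcomp
  · obtain ⟨p1, p2, rfl, hp1, hp2⟩ := map_eq_add_split Prod.snd _ p _ hsnd
    obtain ⟨pA, SS, USs, g1, g2, g3, g4, g5⟩ :=
      aggT hTpre.1 p1 ts hp1 (fun q hq => hall q (Multiset.mem_add.mpr (Or.inl hq)))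
    obtain ⟨pB, f1, f2, f3⟩ :=
      aggU hleaf hTpre.1 hUpre.1 p2 us hp2
        (fun q hq => hall q (Multiset.mem_add.mpr (Or.inr hq)))
    have hcompT : rT (vT ::ₘ ((pA.map Prod.fst).sum)) t := by
      have := hTpre.2 (({vT}, vT) ::ₘ pA) t
        (by rw [Multiset.map_cons, g1]; exact h1)
        (by
          intro q hq
          rcases Multiset.mem_cons.mp hq with rfl | hq
          · exact hTpre.1 vT
          · exact g2 q hq)
      simpa [Multiset.singleton_add] using this
    rw [g3] at hcompT
    have hnd := hTsimp _ _ hcompT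
    have hcount := Multiset.nodup_iff_count_le_one.mp hnd vT
    rw [Multiset.count_cons_self, Multiset.count_add, Multiset.count_replicate_self] at hcount
    have hUSs : USs = 0 := Multiset.card_eq_zero.mp (by omega)
    subst hUSs
    have hSS : rT (vT ::ₘ SS) t := by simpa using hcompT
    have hcompU : rU ((pB.map Prod.fst).sum) vU :=
      hUpre.2 pB vU (by rw [f1]; exact h2) f2
    rw [Multiset.map_add, Multiset.sum_add, g5, f3]
    simpa using graft_mix hSS hcompU

lemma graft_prebroad (hTpre : IsPreBroad rT) (hUpre : IsPreBroad rU)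
    (hTsimp : Simple rT) (hleaf : IsLeaf rT vT) :
    IsPreBroad (graftRel rT rU vT vU) :=
  ⟨graft_refl hTpre.1 hUpre.1, graft_btrans hTpre hUpre hTsimp hleaf⟩

end PreBroad

section Broad

variable {A B : Type u} {rT : Rel A} {rU : Rel B} {vT : A} {vU : B}

lemma comp_single {r : Rel X} (hpre : IsPreBroad r) {fs : Multiset X} {a e : X}
    (htop : r {a} e) (hblock : r fs a) : r fs e := by
  have := hpre.2 ({(fs, a)} : Multiset _) e (by simpa using htop)
    (by intro q hq; rw [Multiset.mem_singleton.mp hq]; exact hblock)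
  simpa using this

lemma comp_cons {r : Rel X} (hpre : IsPreBroad r) {gs : Multiset X} {v a e : X}
    (htop : r (v ::ₘ {a}) e) (hblock : r gs a) : r (v ::ₘ gs) e := by
  have := hpre.2 (({v}, v) ::ₘ {(gs, a)}) e (by simpa using htop)
    (by
      intro q hq
      rcases Multiset.mem_cons.mp hq with rfl | hq
      · exact hpre.1 v
      · rw [Multiset.mem_singleton.mp hq]; exact hblock)
  simpa [Multiset.singleton_add] using this

lemma no_self_cons {r : Rel X} (hpre : IsPreBroad r) (hsimp : Simple r)
    {v b : X} (h : r (v ::ₘ {b}) b) : False := by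
  have heq := eq_singleton_of_mem hpre hsimp h (by simp)
  have := congrArg Multiset.card heq
  simp at this

lemma singleton_below_inl (hTr : ∀ e, rT {e} e) {x : GraftSet A B vU} {b : A}
    (h : graftRel rT rU vT vU {x} (Sum.inl b)) :
    (∃ a, x = Sum.inl a ∧ (rT {a} b ∨ rT (vT ::ₘ {a}) b)) ∨
    (∃ w, x = iotaU vT vU w ∧ rT {vT} b ∧ rU {w} vU) := by
  obtain ⟨ss, us, hx, hcase⟩ := claimA hTr h
  rcases add_eq_singleton hx.symm with ⟨hss, hus⟩ | ⟨hss, hus⟩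
  · obtain ⟨a, rfl, hax⟩ := Multiset.map_eq_singleton.mp hss
    have hus0 : us = 0 := Multiset.map_eq_zero.mp hus
    subst hus0
    rcases hcase with ⟨_, hb⟩ | ⟨hb, _⟩
    · exact Or.inl ⟨a, hax.symm, Or.inl hb⟩
    · exact Or.inl ⟨a, hax.symm, Or.inr hb⟩
  · have hss0 : ss = 0 := Multiset.map_eq_zero.mp hss
    subst hss0
    obtain ⟨w, rfl, hwx⟩ := Multiset.map_eq_singleton.mp hus
    rcases hcase with ⟨h0, _⟩ | ⟨hb, hu⟩
    · exact absurd h0 (by simp)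
    · exact Or.inr ⟨w, hwx.symm, by simpa using hb, hu⟩

lemma singleton_below_iota (hTleaf : IsLeaf rT vT) (hTr : ∀ e, rT {e} e)
    (hUr : ∀ e, rU {e} e) {x : GraftSet A B vU} {u : B}
    (h : graftRel rT rU vT vU {x} (iotaU vT vU u)) :
    ∃ w, x = iotaU vT vU w ∧ rU {w} u := by
  obtain ⟨ws, hx, hws⟩ := claimB hTleaf hTr hUr h
  obtain ⟨w, rfl, hwx⟩ := Multiset.map_eq_singleton.mp hx.symm
  exact ⟨w, hwx.symm, hws⟩

lemma graft_antisym (hT : IsBroad rT) (hU : IsBroad rU) (hTsimp : Simple rT)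
    (hTleaf : IsLeaf rT vT) :
    ∀ x y : GraftSet A B vU,
      graftRel rT rU vT vU {x} y → graftRel rT rU vT vU {y} x → x = y := by
  intro x y hxy hyx
  cases y with
  | inl b =>
    rcases singleton_below_inl hT.1.1 hxy with ⟨a, rfl, hab⟩ | ⟨w, rfl, hvb, hwv⟩
    · rcases singleton_below_inl hT.1.1 hyx with ⟨a', ha', hba⟩ | ⟨w', hw', hbv, hwv'⟩
      · have hb : a' = b := (Sum.inl.inj ha').symm
        rw [hb] at hba
        rcases hab with h1 | h1 <;> rcases hba with h2 | h2
        · exact congrArg Sum.inl (hT.2 a b h1 h2)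
        · exact absurd (comp_single hT.1 h1 h2) (fun hh => no_self_cons hT.1 hTsimp hh)
        · exact absurd (comp_cons hT.1 h1 h2) (fun hh => no_self_cons hT.1 hTsimp hh)
        · exfalso
          have hbig := comp_cons hT.1 h1 h2
          have hnd := hTsimp _ _ hbig
          rw [Multiset.nodup_cons] at hnd
          exact hnd.1 (by simp)
      · obtain ⟨hw1, hb⟩ := iotaU_eq_inl hw'.symm
        rcases hab with h1 | h1
        · rw [hb] at h1 ⊢
          have hav : ({a} : Multiset A) = {vT} := by
            by_contra hne; exact hTleaf ⟨{a}, h1, hne⟩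
          exact congrArg Sum.inl (Multiset.singleton_inj.mp hav)
        · exfalso
          rw [hb] at h1
          have hav : vT ::ₘ {a} = {vT} := by
            by_contra hne; exact hTleaf ⟨_, h1, hne⟩
          have := congrArg Multiset.card hav
          simp at this
    · obtain ⟨w', hw', hww⟩ := singleton_below_iota hTleaf hT.1.1 hU.1.1 hyx
      obtain ⟨hw1, hb⟩ := iotaU_eq_inl hw'.symm
      rw [hw1] at hww
      have hwvU : w = vU := hU.2 w vU hwv hww
      rw [hwvU, iotaU_root, hb]
  | inr b2 =>
    have hy : (Sum.inr b2 : GraftSet A B vU) = iotaU vT vU b2.1 := (iotaU_ne b2.2).symm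
    rw [hy] at hxy hyx ⊢
    obtain ⟨w, rfl, hw⟩ := singleton_below_iota hTleaf hT.1.1 hU.1.1 hxy
    obtain ⟨w', hw', hww⟩ := singleton_below_iota hTleaf hT.1.1 hU.1.1 hyx
    have he : w' = b2.1 := iotaU_inj hw'.symm
    subst he
    exact congrArg (iotaU vT vU) (hU.2 w b2.1 hw hww)

end Broad

section TreeParts

variable {A B : Type u} {rT : Rel A} {rU : Rel B} {vT : A} {vU : B}

lemma snd_map_pair (f : X → Y) (p : Multiset (Multiset X × X)) :
    (p.map (fun q => (q.1.map f, f q.2))).map Prod.snd = (p.map Prod.snd).map f := by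
  induction p using Multiset.induction with
  | empty => simp
  | cons a s ih => simp [ih]

lemma fst_map_pair (f : X → Y) (p : Multiset (Multiset X × X)) :
    (p.map (fun q => (q.1.map f, f q.2))).map Prod.fst = (p.map Prod.fst).map (Multiset.map f) := by
  induction p using Multiset.induction with
  | empty => simp
  | cons a s ih => simp [ih]

lemma mem_msum {s : Multiset (Multiset X)} {a : X} (h : a ∈ s.sum) : ∃ t ∈ s, a ∈ t := by
  induction s using Multiset.induction with
  | empty => simp at h
  | cons b s ih =>
    rw [Multiset.sum_cons, Multiset.mem_add] at h
    rcases h with h | h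
    · exact ⟨b, by simp, h⟩
    · obtain ⟨t, ht, hat⟩ := ih h
      exact ⟨t, by simp [ht], hat⟩

lemma graft_simple (hTsimp : Simple rT) (hUsimp : Simple rU) :
    Simple (graftRel rT rU vT vU) := by
  rintro fs e (⟨ts, t, h, rfl, _⟩ | ⟨us, u, h, rfl, _⟩ | ⟨ts, t, us, h1, h2, rfl, _⟩)
  · exact Multiset.Nodup.map Sum.inl_injective (hTsimp _ _ h)
  · exact Multiset.Nodup.map iotaU_inj (hUsimp _ _ h)
  · have hnd := hTsimp _ _ h1
    rw [Multiset.nodup_cons] at hnd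
    rw [Multiset.nodup_add]
    refine ⟨Multiset.Nodup.map Sum.inl_injective hnd.2,
      Multiset.Nodup.map iotaU_inj (hUsimp _ _ h2), ?_⟩
    rw [Multiset.disjoint_left]
    rintro x hx1 hx2
    obtain ⟨s, hs, rfl⟩ := Multiset.mem_map.mp hx1
    obtain ⟨u, hu, hux⟩ := Multiset.mem_map.mp hx2
    obtain ⟨_, ha⟩ := iotaU_eq_inl hux
    rw [ha] at hs
    exact hnd.1 hs

lemma graft_root (hroot : ∀ e, descends rU e vU)
    (hTroot : ∃ rt, ∀ e, descends rT e rt) :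
    ∃ rt, ∀ x, descends (graftRel rT rU vT vU) x rt := by
  obtain ⟨rtT, hrt⟩ := hTroot
  refine ⟨Sum.inl rtT, ?_⟩
  intro x
  cases x with
  | inl a =>
    obtain ⟨ts, hts, hmem⟩ := hrt a
    exact ⟨ts.map Sum.inl, graft_ofT hts, Multiset.mem_map_of_mem _ hmem⟩
  | inr b =>
    obtain ⟨us, hus, hbm⟩ := hroot b.1
    obtain ⟨ts, hts, hvm⟩ := hrt vT
    obtain ⟨ts', rfl⟩ := Multiset.exists_cons_of_mem hvm
    refine ⟨ts'.map Sum.inl + us.map (iotaU vT vU), graft_mix hts hus, ?_⟩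
    rw [Multiset.mem_add]
    exact Or.inr (Multiset.mem_map.mpr ⟨b.1, hbm, by rw [iotaU_ne b.2]⟩)

lemma liftT {gs fs : Multiset A} (h : tupleLE rT gs fs) :
    tupleLE (graftRel rT rU vT vU) (gs.map Sum.inl) (fs.map Sum.inl) := by
  obtain ⟨p, h1, h2, h3⟩ := h
  refine ⟨p.map (fun q => (q.1.map Sum.inl, Sum.inl q.2)), ?_, ?_, ?_⟩
  · rw [snd_map_pair, h1]
  · rw [fst_map_pair, sum_map_map, h2]
  · intro q hq
    obtain ⟨q', hq', rfl⟩ := Multiset.mem_map.mp hq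
    exact graft_ofT (h3 q' hq')

lemma liftU {gs fs : Multiset B} (h : tupleLE rU gs fs) :
    tupleLE (graftRel rT rU vT vU) (gs.map (iotaU vT vU)) (fs.map (iotaU vT vU)) := by
  obtain ⟨p, h1, h2, h3⟩ := h
  refine ⟨p.map (fun q => (q.1.map (iotaU vT vU), iotaU vT vU q.2)), ?_, ?_, ?_⟩
  · rw [snd_map_pair, h1]
  · rw [fst_map_pair, sum_map_map, h2]
  · intro q hq
    obtain ⟨q', hq', rfl⟩ := Multiset.mem_map.mp hq
    exact graft_ofU (h3 q' hq')

lemma route {pA : Multiset (Multiset A × A)} {ss : Multiset A} {us : Multiset B}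
    (hall : ∀ q ∈ pA, rT q.1 q.2) (hsum : (pA.map Prod.fst).sum = vT ::ₘ ss)
    (hus : rU us vU) :
    tupleLE (graftRel rT rU vT vU) (ss.map Sum.inl + us.map (iotaU vT vU))
      ((pA.map Prod.snd).map Sum.inl) := by
  have hvmem : vT ∈ (pA.map Prod.fst).sum := by rw [hsum]; simp
  obtain ⟨bs0, hb0, hvb⟩ : ∃ bs0 ∈ pA.map Prod.fst, vT ∈ bs0 := mem_msum hvmem
  obtain ⟨q0, hq0, rfl⟩ := Multiset.mem_map.mp hb0
  obtain ⟨pA', rfl⟩ := Multiset.exists_cons_of_mem hq0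
  obtain ⟨bs, hbs⟩ := Multiset.exists_cons_of_mem hvb
  refine ⟨(bs.map Sum.inl + us.map (iotaU vT vU), Sum.inl q0.2) ::ₘ
      pA'.map (fun q => (q.1.map Sum.inl, Sum.inl q.2)), ?_, ?_, ?_⟩
  · simp only [Multiset.map_cons, snd_map_pair, Multiset.map_map]
    rfl
  · simp only [Multiset.map_cons, Multiset.sum_cons]
    have hss : bs + (pA'.map Prod.fst).sum = ss := by
      have : (((q0 ::ₘ pA').map Prod.fst)).sum = vT ::ₘ (bs + (pA'.map Prod.fst).sum) := by
        simp only [Multiset.map_cons, Multiset.sum_cons, hbs, Multiset.cons_add]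
      rw [this] at hsum
      exact (Multiset.cons_inj_right vT).mp hsum.symm |>.symm
    rw [fst_map_pair, sum_map_map, ← hss]
    rw [Multiset.map_add]
    rw [add_assoc, add_comm (us.map (iotaU vT vU)) _, ← add_assoc]
  · intro q hq
    rcases Multiset.mem_cons.mp hq with rfl | hq
    · exact graft_mix (by rw [← hbs]; exact hall q0 (Multiset.mem_cons_self q0 pA')) hus
    · obtain ⟨q', hq', rfl⟩ := Multiset.mem_map.mp hq
      exact graft_ofT (hall q' (Multiset.mem_cons_of_mem hq'))

end TreeParts

section Trich

variable {A B : Type u} {rT : Rel A} {rU : Rel B} {vT : A} {vU : B}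

lemma graft_trichotomy (hTpre : IsPreBroad rT) (hUpre : IsPreBroad rU)
    (hTtri : ∀ e : A, IsLeaf rT e ∨ ∃ fs, upTuple rT e fs)
    (hUtri : ∀ e : B, IsLeaf rU e ∨ ∃ fs, upTuple rU e fs)
    (hleaf : IsLeaf rT vT) :
    ∀ x : GraftSet A B vU, IsLeaf (graftRel rT rU vT vU) x ∨
      ∃ fs, upTuple (graftRel rT rU vT vU) x fs := by
  intro x
  cases x with
  | inl t =>
    by_cases ht : t = vT
    · rw [ht]
      rcases hUtri vU with hUleaf | ⟨us₀, hup⟩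
      · left
        rintro ⟨fs, hfs, hne⟩
        rw [← iotaU_root (vT := vT) (vU := vU)] at hfs
        obtain ⟨ws, rfl, hws⟩ := claimB hleaf hTpre.1 hUpre.1 hfs
        have hwsv : ws = {vU} := by
          by_contra hne'; exact hUleaf ⟨ws, hws, hne'⟩
        apply hne; rw [hwsv]; simp [iotaU_root]
      · right
        refine ⟨us₀.map (iotaU vT vU), ⟨⟨?_, ?_⟩, ?_⟩⟩
        · have := graft_mix (ts := 0) (by simpa using hTpre.1 vT) hup.1.1
          simpa using this
        · intro h
          obtain ⟨u, hu, hiu⟩ := Multiset.map_eq_singleton.mp h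
          obtain ⟨huv, _⟩ := iotaU_eq_inl hiu
          exact hup.1.2 (by rw [hu, huv])
        · intro gs hgs hne
          rw [← iotaU_root (vT := vT) (vU := vU)] at hgs
          obtain ⟨ws, rfl, hws⟩ := claimB hleaf hTpre.1 hUpre.1 hgs
          have hwsne : ws ≠ {vU} := by
            rintro rfl; apply hne; simp [iotaU_root]
          exact liftU (hup.2 ws hws hwsne)
    · rcases hTtri t with hTleaf' | ⟨ts₀, hup⟩
      · left
        rintro ⟨fs, hfs, hne⟩
        obtain ⟨ss, us, rfl, hcase⟩ := claimA hTpre.1 hfs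
        rcases hcase with ⟨rfl, hss⟩ | ⟨h1, h2⟩
        · have hsst : ss = {t} := by by_contra hne'; exact hTleaf' ⟨ss, hss, hne'⟩
          apply hne; rw [hsst]; simp
        · have hvss : vT ::ₘ ss = {t} := by
            by_contra hne'; exact hTleaf' ⟨_, h1, hne'⟩
          have hm := Multiset.mem_cons_self vT ss
          rw [hvss] at hm
          exact ht (Multiset.mem_singleton.mp hm).symm
      · right
        refine ⟨ts₀.map Sum.inl, ⟨⟨graft_ofT hup.1.1, ?_⟩, ?_⟩⟩
        · intro h
          obtain ⟨a, ha, hia⟩ := Multiset.map_eq_singleton.mp h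
          exact hup.1.2 (by rw [ha, Sum.inl.inj hia])
        · intro gs hgs hne
          obtain ⟨ss, us, rfl, hcase⟩ := claimA hTpre.1 hgs
          rcases hcase with ⟨rfl, hss⟩ | ⟨h1, h2⟩
          · have hssne : ss ≠ {t} := by rintro rfl; apply hne; simp
            have := liftT (rU := rU) (vT := vT) (vU := vU) (hup.2 ss hss hssne)
            simpa using this
          · have hne' : vT ::ₘ ss ≠ {t} := by
              intro hvs
              have hm := Multiset.mem_cons_self vT ss
              rw [hvs] at hm
              exact ht (Multiset.mem_singleton.mp hm).symm
            obtain ⟨pA, g1, g2, g3⟩ := hup.2 _ h1 hne'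
            have hr := route g3 g2 h2
            rw [g1] at hr
            exact hr
  | inr b =>
    have hx : (Sum.inr b : GraftSet A B vU) = iotaU vT vU b.1 := (iotaU_ne b.2).symm
    rw [hx]
    rcases hUtri b.1 with hUleaf | ⟨us₀, hup⟩
    · left
      rintro ⟨fs, hfs, hne⟩
      obtain ⟨ws, rfl, hws⟩ := claimB hleaf hTpre.1 hUpre.1 hfs
      have hwb : ws = {b.1} := by by_contra hne'; exact hUleaf ⟨ws, hws, hne'⟩
      apply hne; rw [hwb]; simp
    · right
      refine ⟨us₀.map (iotaU vT vU), ⟨⟨graft_ofU hup.1.1, ?_⟩, ?_⟩⟩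
      · intro h
        obtain ⟨u, hu, hiu⟩ := Multiset.map_eq_singleton.mp h
        exact hup.1.2 (by rw [hu, iotaU_inj hiu])
      · intro gs hgs hne
        obtain ⟨ws, rfl, hws⟩ := claimB hleaf hTpre.1 hUpre.1 hgs
        have hwsne : ws ≠ {b.1} := by rintro rfl; exact hne (by simp)
        exact liftU (hup.2 ws hws hwsne)

end Trich

lemma graft_finite {A B : Type u} {vU : B} (hA : Finite A) (hB : Finite B) :
    Finite (GraftSet A B vU) := by
  haveI := hA; haveI := hB
  infer_instance

/-- If `v` is a leaf of the tree `T` and the root of the tree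
`U`, then the grafting (whose broad relations are exactly the three listed
kinds) is again a tree, and it is the pushout `T ⨿_η U` in the category of
pre-broad posets. -/
theorem stmt5 {A B : Type u} (rT : Rel A) (rU : Rel B) (vT : A) (vU : B)
    (hT : IsTree rT) (hU : IsTree rU)
    (hleaf : IsLeaf rT vT) (hroot : ∀ e, descends rU e vU) :
    IsTree (graftRel rT rU vT vU) ∧
    BroadHom rT (graftRel rT rU vT vU) Sum.inl ∧
    BroadHom rU (graftRel rT rU vT vU) (iotaU vT vU) ∧
    (∀ {Y : Type u} (a : Rel Y), IsPreBroad a →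
      ∀ (φT : A → Y) (φU : B → Y), BroadHom rT a φT → BroadHom rU a φU →
        φT vT = φU vU →
        ∃! ψ : GraftSet A B vU → Y,
          BroadHom (graftRel rT rU vT vU) a ψ ∧
            ψ ∘ Sum.inl = φT ∧ ψ ∘ iotaU vT vU = φU) := by
  classical
  obtain ⟨hTbroad, hTfin, hTsimp, hTtri, hTroot⟩ := hT
  obtain ⟨hUbroad, hUfin, hUsimp, hUtri, hUroot⟩ := hU
  have hTpre : IsPreBroad rT := hTbroad.1
  have hUpre : IsPreBroad rU := hUbroad.1
  refine ⟨⟨⟨graft_prebroad hTpre hUpre hTsimp hleaf,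
      graft_antisym hTbroad hUbroad hTsimp hleaf⟩,
      graft_finite hTfin hUfin, graft_simple hTsimp hUsimp,
      graft_trichotomy hTpre hUpre hTtri hUtri hleaf,
      graft_root hroot hTroot⟩,
    (fun fs e h => graft_ofT h), (fun fs e h => graft_ofU h), ?_⟩
  intro Y a ha φT φU hφT hφU hv
  set ψ : GraftSet A B vU → Y := Sum.elim φT (fun b => φU b.1) with hψdef
  have hcomp : ∀ b, ψ (iotaU vT vU b) = φU b := by
    intro b
    by_cases hb : b = vU
    · rw [hb, iotaU_root]; exact hv
    · rw [iotaU_ne hb]; rfl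
  have hmapU : ∀ us : Multiset B, (us.map (iotaU vT vU)).map ψ = us.map φU := by
    intro us
    rw [Multiset.map_map]
    exact Multiset.map_congr rfl (fun b _ => hcomp b)
  have hmapT : ∀ ts : Multiset A, (ts.map Sum.inl).map ψ = ts.map φT := by
    intro ts
    rw [Multiset.map_map]
    rfl
  refine ⟨ψ, ⟨?_, rfl, funext hcomp⟩, ?_⟩
  · rintro fs e (⟨ts, t, h, rfl, rfl⟩ | ⟨us, u, h, rfl, rfl⟩ | ⟨ts, t, us, h1, h2, rfl, rfl⟩)
    · rw [hmapT]
      exact hφT ts t h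
    · rw [hmapU, hcomp u]
      exact hφU us u h
    · rw [Multiset.map_add, hmapT, hmapU]
      have htop := hφT _ _ h1
      have hUrel := hφU _ _ h2
      have := ha.2 ((us.map φU, φU vU) ::ₘ (ts.map (fun s => ({φT s}, φT s)))) (φT t)
        (by
          rw [Multiset.map_cons, Multiset.map_map]
          have hsnd : (ts.map (Prod.snd ∘ fun s => (({φT s} : Multiset Y), φT s))) = ts.map φT := rfl
          rw [hsnd]
          rw [← hv]
          simpa [Multiset.map_cons] using htop)
        (by
          intro q hq
          rcases Multiset.mem_cons.mp hq with rfl | hq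
          · exact hUrel
          · obtain ⟨s, _, rfl⟩ := Multiset.mem_map.mp hq
            exact ha.1 (φT s))
      have hsum : ((((us.map φU, φU vU) ::ₘ (ts.map (fun s => (({φT s} : Multiset Y), φT s)))).map Prod.fst)).sum
          = us.map φU + ts.map φT := by
        rw [Multiset.map_cons, Multiset.sum_cons, Multiset.map_map]
        congr 1
        have : (ts.map (Prod.fst ∘ fun s => (({φT s} : Multiset Y), φT s)))
            = (ts.map φT).map (fun y => ({y} : Multiset Y)) := by
          rw [Multiset.map_map]
          rfl
        rw [this, Multiset.sum_map_singleton]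
      rw [hsum] at this
      rw [add_comm]
      exact this
  · rintro ψ' ⟨hhom, hT', hU'⟩
    funext x
    cases x with
    | inl t => exact congrFun hT' t
    | inr b =>
      have h1 : ψ' (iotaU vT vU b.1) = φU b.1 := congrFun hU' b.1
      rw [iotaU_ne b.2] at h1
      exact h1


end BroadPaper
end
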